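/- arXiv:1607.08495 — 8 statements merged into one kernel-verified Lean document; each statement's English description precedes it below -/
import Mathlib

section
/- Let λ ⊂ μ be partitions and n an integer. Suppose μ differs from λ only in row j (for some j ≥ 1), i.e. μᵢ = λᵢ for all i ≠ j and μⱼ > λⱼ, and the last box added in row j has content μⱼ - j = n - |λ| (so (λ,μ) form an n-pair). Then, writing x = λ_[n] + ρ and y = μ_[n] + ρ, we have y = s_{0,j}(x), where s_{0,j} swaps coordinates 0 and j. -/
/-- Standard basis vector of `ℤ^∞`. -/
def eps (m : ℕ) : ℕ → ℤ := fun i => if i = m then 1 else 0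

/-- Transposition of coordinates `0` and `j` acting on `ℤ^∞`. -/
def swap0 (j : ℕ) (x : ℕ → ℤ) : ℕ → ℤ :=
  fun i => if i = 0 then x j else if i = j then x 0 else x i

/-- The tail coordinates `x₁ > x₂ > ⋯` are strictly decreasing. -/
def StrictTail (x : ℕ → ℤ) : Prop := ∀ i, 1 ≤ i → x (i + 1) < x i

/-- `x` is on the `j`-th wall (`j ≥ 1`). -/
def OnWall (x : ℕ → ℤ) (j : ℕ) : Prop := 1 ≤ j ∧ x 0 = x j

/-- `x` is in the `j`-th alcove: for `j = 1` this means `x₀ > x₁`;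
for `j > 1` it means `x_{j-1} > x₀ > x_j`. -/
def InAlcove (x : ℕ → ℤ) (j : ℕ) : Prop :=
  1 ≤ j ∧ (j = 1 → x 1 < x 0) ∧ (1 < j → x j < x 0 ∧ x 0 < x (j - 1))

/-- `x` is in the first alcove: all coordinates strictly decreasing. -/
def InFirstAlcove (x : ℕ → ℤ) : Prop := ∀ i, x (i + 1) < x i

/-- A partition, recorded as a finitely supported function with `λ_i` the `i`-th part
(for `i ≥ 1`; the value at `0` is unused and required to be `0`). -/
def IsPartition (l : ℕ →₀ ℕ) : Prop := l 0 = 0 ∧ ∀ i, 1 ≤ i → l (i + 1) ≤ l i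

/-- `|λ| = Σᵢ λᵢ`. -/
def psize (l : ℕ →₀ ℕ) : ℕ := l.sum fun _ v => v

/-- `λ_[n] = (n - |λ|, λ₁, λ₂, …) ∈ ℤ^∞`. -/
def lamBr (l : ℕ →₀ ℕ) (n : ℤ) : ℕ → ℤ :=
  fun i => if i = 0 then n - psize l else (l i : ℤ)

/-- `ρ = (0, -1, -2, -3, …)`. -/
def rho : ℕ → ℤ := fun i => -(i : ℤ)

/-- `λ_[n] + ρ`. -/
def vec (l : ℕ →₀ ℕ) (n : ℤ) : ℕ → ℤ := fun i => lamBr l n i + rho i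

/-- The embedding `φ_n` of the branching graph: `(λ,k) ↦ λ_[n]+ρ` for `k` even,
`λ_[n-1]+ρ` for `k` odd. -/
def phi (n : ℤ) (l : ℕ →₀ ℕ) (k : ℕ) : ℕ → ℤ :=
  if k % 2 = 0 then vec l n else vec l (n - 1)

/-- A vertex `(λ, k)` of the branching graph `Y`: `λ ⊢ l ≤ ⌊k/2⌋`. -/
def IsVertex (l : ℕ →₀ ℕ) (k : ℕ) : Prop := IsPartition l ∧ psize l ≤ k / 2

/-- An edge `(μ, k-1) → (λ, k)` of the branching graph `Y`: either `λ = μ`,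
or `k` even and `λ = μ ∪ {a}` for an addable node `a`, or `k` odd and
`λ = μ \ {a}` for a removable node `a`. -/
def BrEdge (mu lam : ℕ →₀ ℕ) (k : ℕ) : Prop :=
  lam = mu ∨
    (k % 2 = 0 ∧ ∃ j, 1 ≤ j ∧ (∀ m, m ≠ j → lam m = mu m) ∧ lam j = mu j + 1) ∨
    (k % 2 = 1 ∧ ∃ j, 1 ≤ j ∧ (∀ m, m ≠ j → lam m = mu m) ∧ mu j = lam j + 1)

theorem stmt2 (l m : ℕ →₀ ℕ) (hl : IsPartition l) (hm : IsPartition m) (n : ℤ)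
    (j : ℕ) (hj : 1 ≤ j)
    (hrows : ∀ i, i ≠ j → m i = l i) (hlt : l j < m j)
    (hcont : (m j : ℤ) - j = n - psize l) :
    vec m n = swap0 j (vec l n) := by
  have hm' : m = l + Finsupp.single j (m j - l j) := by
    ext i
    by_cases h : i = j
    · subst h; simp [Finsupp.single_apply]; omega
    · simp [Finsupp.single_apply, h, Ne.symm h, hrows i h]
  have key : psize m = psize l + (m j - l j) := by
    conv_lhs => rw [psize, hm', Finsupp.sum_add_index' (fun _ => rfl) (fun _ _ _ => rfl),
      Finsupp.sum_single_index rfl]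
    rfl
  have keyZ : (psize m : ℤ) = psize l + ((m j : ℤ) - l j) := by
    rw [key, Nat.cast_add, Nat.cast_sub hlt.le]
  have hj0 : j ≠ 0 := by omega
  funext i
  by_cases h0 : i = 0
  · subst h0
    simp [vec, lamBr, swap0, rho, hj0]
    omega
  · by_cases h : i = j
    · subst h
      simp [vec, lamBr, swap0, rho, h0]
      omega
    · simp [vec, lamBr, swap0, rho, h0, h, hrows i h]
end

section
/- Let λ, μ be partitions with |λ| < |μ| and n an integer. If (μ_[n] + ρ) = s_{0,j}(λ_[n] + ρ) for some j ≥ 1, then (λ,μ) form an n-pair: μ differs from λ exactly in row j and μⱼ - j = n - |λ|. -/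
theorem stmt3 (l m : ℕ →₀ ℕ) (hl : IsPartition l) (hm : IsPartition m) (n : ℤ)
    (j : ℕ) (hj : 1 ≤ j) (hsize : psize l < psize m)
    (hrefl : vec m n = swap0 j (vec l n)) :
    (∀ i, i ≠ j → m i = l i) ∧ l j < m j ∧ (m j : ℤ) - j = n - psize l := by
  have hj0 : j ≠ 0 := by omega
  have h0 := congrFun hrefl 0
  have hjj := congrFun hrefl j
  simp [vec, swap0, lamBr, rho, hj0] at h0 hjj
  refine ⟨?_, by omega, by omega⟩
  intro i hi
  rcases eq_or_ne i 0 with rfl | hi0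
  · rw [hl.1, hm.1]
  · have h := congrFun hrefl i
    simp [vec, swap0, lamBr, rho, hi0, hi] at h
    omega
end

section
/- Let x, y ∈ ℤ^∞ both satisfy the strict decrease condition x₁ > x₂ > ⋯ and y₁ > y₂ > ⋯ , and assume each of x, y either lies in some alcove or on some wall. Suppose |λ| < |μ| where x = λ_[n]+ρ and y = μ_[n]+ρ for partitions λ, μ, and y = s_{0,j}(x) for some j ≥ 1. Then x is in the j-th alcove and y is in the (j+1)-th alcove. -/
theorem stmt4 (l m : ℕ →₀ ℕ) (hl : IsPartition l) (hm : IsPartition m) (n : ℤ)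
    (j : ℕ) (hj : 1 ≤ j)
    (hxt : StrictTail (vec l n)) (hyt : StrictTail (vec m n))
    (hxpos : ∃ i, 1 ≤ i ∧ (InAlcove (vec l n) i ∨ OnWall (vec l n) i))
    (hypos : ∃ i, 1 ≤ i ∧ (InAlcove (vec m n) i ∨ OnWall (vec m n) i))
    (hsize : psize l < psize m)
    (hrefl : vec m n = swap0 j (vec l n)) :
    InAlcove (vec l n) j ∧ InAlcove (vec m n) (j + 1) := by
  set x := vec l n with hx
  set y := vec m n with hy
  have hj0 : j ≠ 0 := by omega
  have h0 : y 0 = x j := by rw [hrefl]; simp [swap0]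
  have hjy : y j = x 0 := by rw [hrefl]; simp [swap0, hj0]
  have hx0 : x 0 = n - psize l := by simp [hx, vec, lamBr, rho]
  have hy0 : y 0 = n - psize m := by simp [hy, vec, lamBr, rho]
  have hxj : x j < x 0 := by
    rw [← h0, hx0, hy0]; omega
  have hiy : ∀ i, i ≠ 0 → i ≠ j → y i = x i := by
    intro i hi hij
    rw [hrefl]; simp [swap0, hi, hij]
  constructor
  · refine ⟨hj, ?_, ?_⟩
    · intro h1; rw [← h1]; exact hxj
    · intro h1
      refine ⟨hxj, ?_⟩
      have hy1 : y ((j - 1) + 1) < y (j - 1) := hyt (j - 1) (by omega)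
      have hj1 : (j - 1) + 1 = j := by omega
      rw [hj1] at hy1
      rw [hiy (j - 1) (by omega) (by omega)] at hy1
      rw [← hjy]; exact hy1
  · refine ⟨by omega, by omega, ?_⟩
    intro _
    have hxt1 : x (j + 1) < x j := hxt j hj
    have hj1 : j + 1 - 1 = j := by omega
    rw [hj1, hjy, hiy (j + 1) (by omega) (by omega), h0]
    exact ⟨hxt1, hxj⟩
end

section
/- Let x, y ∈ ℤ^∞ with strictly decreasing tails (x₁>x₂>⋯ and y₁>y₂>⋯), each in an alcove or on a wall. Assume x is in the j-th alcove and y = x ± ε_m for some m ≥ 0 (i.e. y differs from x by adding or subtracting 1 in a single coordinate). Then exactly one of the following holds: (1) y is in the j-th alcove; (2) y is on the j-th wall, and y = x + ε_j or y = x − ε₀; (3) y is on the (j−1)-th wall, and y = x + ε₀ or y = x − ε_{j−1}. -/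
theorem pack3 {P1 P2 P3 : Prop} (h : P1 ∨ P2 ∨ P3)
    (h12 : P1 → ¬P2) (h13 : P1 → ¬P3) (h23 : P2 → ¬P3) :
    (P1 ∧ ¬P2 ∧ ¬P3) ∨ (¬P1 ∧ P2 ∧ ¬P3) ∨ (¬P1 ∧ ¬P2 ∧ P3) := by
  tauto

theorem stmt5 (x y : ℕ → ℤ) (j m : ℕ)
    (hxt : StrictTail x) (hyt : StrictTail y)
    (hx : InAlcove x j)
    (hy : ∃ i, 1 ≤ i ∧ (InAlcove y i ∨ OnWall y i))
    (hstep : (y = fun i => x i + eps m i) ∨ (y = fun i => x i - eps m i)) :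
    (InAlcove y j ∧
        ¬ (OnWall y j ∧ ((y = fun i => x i + eps j i) ∨ (y = fun i => x i - eps 0 i))) ∧
        ¬ (OnWall y (j - 1) ∧
            ((y = fun i => x i + eps 0 i) ∨ (y = fun i => x i - eps (j - 1) i)))) ∨
      (¬ InAlcove y j ∧
        (OnWall y j ∧ ((y = fun i => x i + eps j i) ∨ (y = fun i => x i - eps 0 i))) ∧
        ¬ (OnWall y (j - 1) ∧
            ((y = fun i => x i + eps 0 i) ∨ (y = fun i => x i - eps (j - 1) i)))) ∨
      (¬ InAlcove y j ∧
        ¬ (OnWall y j ∧ ((y = fun i => x i + eps j i) ∨ (y = fun i => x i - eps 0 i))) ∧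
        (OnWall y (j - 1) ∧
            ((y = fun i => x i + eps 0 i) ∨ (y = fun i => x i - eps (j - 1) i)))) := by
  obtain ⟨hj, hxa1, hxa2⟩ := hx
  refine pack3 ?_ ?_ ?_ ?_
  · -- key disjunction
    rcases hstep with rfl | rfl <;>
    rcases Nat.lt_or_ge j 2 with hj1 | hj2
    -- plus, j = 1
    · have hj1 : j = 1 := by omega
      subst hj1
      have h1 : x 1 < x 0 := hxa1 rfl
      by_cases hm : m = 1
      · subst hm
        by_cases hw : x 1 + 1 = x 0
        · refine Or.inr (Or.inl ⟨⟨le_refl 1, ?_⟩, Or.inl rfl⟩)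
          simp only [eps]; norm_num; omega
        · refine Or.inl ⟨le_refl 1, fun _ => ?_, fun h => absurd h (lt_irrefl 1)⟩
          simp only [eps]; norm_num; omega
      · refine Or.inl ⟨le_refl 1, fun _ => ?_, fun h => absurd h (lt_irrefl 1)⟩
        by_cases hm0 : m = 0
        · subst hm0; simp [eps]; omega
        · simp [eps, Ne.symm hm0, Ne.symm hm]; omega
    -- plus, j ≥ 2
    · obtain ⟨hb, hc⟩ := hxa2 hj2
      by_cases hm0 : m = 0
      · subst hm0
        by_cases hw : x 0 + 1 = x (j - 1)
        · refine Or.inr (Or.inr ⟨⟨by omega, ?_⟩, Or.inl rfl⟩)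
          simp [eps, show j - 1 ≠ 0 by omega]; omega
        · refine Or.inl ⟨hj, fun h => absurd h (by omega), fun _ => ⟨?_, ?_⟩⟩ <;>
            · simp [eps, show j ≠ 0 by omega, show j - 1 ≠ 0 by omega]; omega
      · by_cases hmj : m = j
        · subst hmj
          by_cases hw : x m + 1 = x 0
          · refine Or.inr (Or.inl ⟨⟨hj, ?_⟩, Or.inl rfl⟩)
            simp [eps, show 0 ≠ m by omega]; omega
          · refine Or.inl ⟨hj, fun h => absurd h (by omega), fun _ => ⟨?_, ?_⟩⟩ <;>
              · simp [eps, show 0 ≠ m by omega, show m - 1 ≠ m by omega]; omega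
        · by_cases hmj1 : m = j - 1
          · subst hmj1
            refine Or.inl ⟨hj, fun h => absurd h (by omega), fun _ => ⟨?_, ?_⟩⟩ <;>
              · simp [eps, show 0 ≠ j - 1 by omega, show j ≠ j - 1 by omega]; omega
          · refine Or.inl ⟨hj, fun h => absurd h (by omega), fun _ => ⟨?_, ?_⟩⟩ <;>
              · simp [eps, Ne.symm hm0, Ne.symm hmj, Ne.symm hmj1]; omega
    -- minus, j = 1
    · have hj1 : j = 1 := by omega
      subst hj1
      have h1 : x 1 < x 0 := hxa1 rfl
      by_cases hm : m = 0
      · subst hm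
        by_cases hw : x 0 - 1 = x 1
        · refine Or.inr (Or.inl ⟨⟨le_refl 1, ?_⟩, Or.inr rfl⟩)
          simp [eps]; omega
        · refine Or.inl ⟨le_refl 1, fun _ => ?_, fun h => absurd h (lt_irrefl 1)⟩
          simp [eps]; omega
      · refine Or.inl ⟨le_refl 1, fun _ => ?_, fun h => absurd h (lt_irrefl 1)⟩
        by_cases hm1 : m = 1
        · subst hm1; simp [eps]; omega
        · simp [eps, Ne.symm hm, Ne.symm hm1]; omega
    -- minus, j ≥ 2
    · obtain ⟨hb, hc⟩ := hxa2 hj2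
      by_cases hm0 : m = 0
      · subst hm0
        by_cases hw : x 0 - 1 = x j
        · refine Or.inr (Or.inl ⟨⟨hj, ?_⟩, Or.inr rfl⟩)
          simp [eps, show j ≠ 0 by omega]; omega
        · refine Or.inl ⟨hj, fun h => absurd h (by omega), fun _ => ⟨?_, ?_⟩⟩ <;>
            · simp [eps, show j ≠ 0 by omega, show j - 1 ≠ 0 by omega]; omega
      · by_cases hmj1 : m = j - 1
        · subst hmj1
          by_cases hw : x 0 = x (j - 1) - 1
          · refine Or.inr (Or.inr ⟨⟨by omega, ?_⟩, Or.inr rfl⟩)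
            simp [eps, show 0 ≠ j - 1 by omega]; omega
          · refine Or.inl ⟨hj, fun h => absurd h (by omega), fun _ => ⟨?_, ?_⟩⟩ <;>
              · simp [eps, show 0 ≠ j - 1 by omega, show j ≠ j - 1 by omega]; omega
        · by_cases hmj : m = j
          · subst hmj
            refine Or.inl ⟨hj, fun h => absurd h (by omega), fun _ => ⟨?_, ?_⟩⟩ <;>
              · simp [eps, show 0 ≠ m by omega, show m - 1 ≠ m by omega]; omega
          · refine Or.inl ⟨hj, fun h => absurd h (by omega), fun _ => ⟨?_, ?_⟩⟩ <;>
              · simp [eps, Ne.symm hm0, Ne.symm hmj, Ne.symm hmj1]; omega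
  · -- InAlcove y j → ¬ (OnWall y j ∧ _)
    rintro ⟨hj', ha1, ha2⟩ ⟨⟨_, hw⟩, -⟩
    rcases Nat.lt_or_ge 1 j with h | h
    · have := (ha2 h).1; omega
    · have hj1 : j = 1 := by omega
      subst hj1
      have := ha1 rfl; omega
  · -- InAlcove y j → ¬ (OnWall y (j-1) ∧ _)
    rintro ⟨hj', ha1, ha2⟩ ⟨⟨hge, hw⟩, -⟩
    have := (ha2 (by omega)).2; omega
  · -- wall j → ¬ wall (j-1)
    rintro ⟨⟨_, hw⟩, -⟩ ⟨⟨hge, hw'⟩, -⟩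
    have hst := hyt (j - 1) hge
    have he : j - 1 + 1 = j := by omega
    rw [he] at hst; omega
end

section
/- Let x, y ∈ ℤ^∞ both with strictly decreasing tails. Suppose y = s_{0,j}(x) with x ≠ y, and suppose x' = x ± ε_u and y' = y ± ε_v (same choice of sign not required) for some coordinates u, v, such that x'_u = y'_v (the changed entries agree). If {u, v} = {0, j} (one of u,v equals 0 and the other equals j), then y' = s_{0,j}(x'). -/
theorem stmt7 (x y x' y' : ℕ → ℤ) (j u v : ℕ) (δ δ' : ℤ)
    (hxt : StrictTail x) (hyt : StrictTail y)
    (hswap : y = swap0 j x) (hne : x ≠ y)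
    (hδ : δ = 1 ∨ δ = -1) (hδ' : δ' = 1 ∨ δ' = -1)
    (hx' : x' = fun i => x i + δ * eps u i) (hy' : y' = fun i => y i + δ' * eps v i)
    (hres : x' u = y' v)
    (huv : (u = 0 ∧ v = j) ∨ (u = j ∧ v = 0)) :
    y' = swap0 j x' := by
  have hj0 : j ≠ 0 := by
    rintro rfl
    apply hne
    funext i
    simp only [hswap, swap0]
    rcases eq_or_ne i 0 with rfl | h
    · simp
    · simp [h]
  subst hswap hx' hy'
  rcases huv with ⟨hu, hv⟩ | ⟨hu, hv⟩
  · subst hu; subst hv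
    funext i
    simp only [swap0, eps] at hres ⊢
    rcases eq_or_ne i 0 with rfl | hi
    · simp [hj0, Ne.symm hj0]
    · rcases eq_or_ne i v with rfl | hij
      · simpa [hj0, Ne.symm hj0, hi] using hres.symm
      · simp [hi, hij]
  · subst hu; subst hv
    funext i
    simp only [swap0, eps] at hres ⊢
    rcases eq_or_ne i 0 with rfl | hi
    · simpa [hj0, Ne.symm hj0] using hres.symm
    · rcases eq_or_ne i u with rfl | hij
      · simp [hj0, Ne.symm hj0]
      · simp [hi, hij]
end

section
/- Let (λ, k) with λ a partition, |λ| ≤ ⌊k/2⌋, and suppose φ_n(λ,k) is in the j-th alcove. Suppose there is an edge (η, k−1) → (λ, k) in the branching graph with φ_n(η, k−1) on the j-th wall. Then: if k is even, λ = η and η with a box added in row j, μ := η + ε_j, is a partition with (μ, k) a vertex of Y; if k is odd, λ = η with a box removed from row j and μ := η gives a vertex (μ, k) of Y. In both cases (η, k−1) → (μ, k) is an edge of Y and φ_n(μ, k) = s_{0,j}(φ_n(λ, k)). -/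
lemma psize_add_single (a : ℕ →₀ ℕ) (j : ℕ) :
    psize (a + Finsupp.single j 1) = psize a + 1 := by
  unfold psize
  rw [Finsupp.sum_add_index' (fun _ => rfl) (fun _ _ _ => rfl),
    Finsupp.sum_single_index rfl]

lemma eq_add_single (a b : ℕ →₀ ℕ) (j : ℕ)
    (h1 : ∀ m, m ≠ j → b m = a m) (h2 : b j = a j + 1) :
    b = a + Finsupp.single j 1 := by
  ext m
  rcases eq_or_ne m j with rfl | hm
  · simp [h2]
  · simp [Finsupp.single_apply, Ne.symm hm, h1 m hm]

lemma alcove_lt {x : ℕ → ℤ} {j : ℕ} (h : InAlcove x j) : x j < x 0 := by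
  obtain ⟨hj, h1, h2⟩ := h
  rcases eq_or_lt_of_le hj with hj1 | hj1
  · subst hj1; exact h1 rfl
  · exact (h2 hj1).1

lemma vec_zero (l : ℕ →₀ ℕ) (n : ℤ) : vec l n 0 = n - psize l := by
  simp [vec, lamBr, rho]

lemma vec_pos (l : ℕ →₀ ℕ) (n : ℤ) {i : ℕ} (hi : i ≠ 0) :
    vec l n i = (l i : ℤ) - i := by
  simp [vec, lamBr, rho, hi, sub_eq_add_neg]

lemma swap0_zero (j : ℕ) (x : ℕ → ℤ) : swap0 j x 0 = x j := by simp [swap0]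

lemma swap0_self (j : ℕ) (x : ℕ → ℤ) (hj : j ≠ 0) : swap0 j x j = x 0 := by
  simp [swap0, hj]

lemma swap0_other (j i : ℕ) (x : ℕ → ℤ) (hi0 : i ≠ 0) (hij : i ≠ j) :
    swap0 j x i = x i := by simp [swap0, hi0, hij]

theorem stmt11 (n : ℤ) (k : ℕ) (hk : 1 ≤ k) (l eta : ℕ →₀ ℕ) (j : ℕ)
    (hlv : IsVertex l k) (hev : IsVertex eta (k - 1))
    (halc : InAlcove (phi n l k) j)
    (hedge : BrEdge eta l k)
    (hwall : OnWall (phi n eta (k - 1)) j) :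
    ∃ mu : ℕ →₀ ℕ, IsVertex mu k ∧ BrEdge eta mu k ∧
      phi n mu k = swap0 j (phi n l k) ∧
      (k % 2 = 0 → l = eta ∧ mu = eta + Finsupp.single j 1) ∧
      (k % 2 = 1 → eta = l + Finsupp.single j 1 ∧ mu = eta) := by
  obtain ⟨hj1, hwall'⟩ := hwall
  have hj0 : j ≠ 0 := by omega
  have hxlt : phi n l k j < phi n l k 0 := alcove_lt halc
  rcases Nat.mod_two_eq_zero_or_one k with hke | hko
  · -- k even
    have hk1 : (k - 1) % 2 = 1 := by omega
    have hphil : phi n l k = vec l n := by simp [phi, hke]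
    have hphie : phi n eta (k - 1) = vec eta (n - 1) := by simp [phi, hk1]
    rw [hphie, vec_zero, vec_pos eta (n-1) hj0] at hwall'
    rw [hphil, vec_zero, vec_pos l n hj0] at hxlt
    rcases hedge with rfl | ⟨_, i, hi1, hin, hie⟩ | ⟨hko', _⟩
    · -- l = eta, mu = l + single j 1
      refine ⟨l + Finsupp.single j 1, ⟨⟨?_, ?_⟩, ?_⟩, ?_, ?_, ?_, ?_⟩
      · simp [Finsupp.single_apply, hj0, hlv.1.1, Ne.symm hj0]
      · -- monotone
        have hkey : 1 < j → (l j : ℤ) + 1 ≤ (l (j - 1) : ℤ) := by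
          intro hj2
          have h2 := (halc.2.2 hj2).2
          rw [hphil, vec_zero, vec_pos l n (by omega : j - 1 ≠ 0)] at h2
          omega
        intro i hi
        have hmono := hlv.1.2
        rcases eq_or_ne j (i + 1) with rfl | h
        · have hkey2 := hkey (by omega)
          have h' : i + 1 - 1 = i := rfl
          rw [h'] at hkey2
          rw [Finsupp.add_apply, Finsupp.add_apply, Finsupp.single_eq_same,
            Finsupp.single_eq_of_ne' (by omega : i + 1 ≠ i)]
          omega
        · rcases eq_or_ne j i with h2 | h2
          · have e1 : (Finsupp.single j 1) i = 1 := by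
              rw [h2]; exact Finsupp.single_eq_same
            rw [Finsupp.add_apply, Finsupp.add_apply, Finsupp.single_eq_of_ne' h, e1]
            have := hmono i hi
            omega
          · rw [Finsupp.add_apply, Finsupp.add_apply,
              Finsupp.single_eq_of_ne' h, Finsupp.single_eq_of_ne' h2]
            simpa using hmono i hi
      · rw [psize_add_single]
        have := hev.2
        omega
      · exact Or.inr (Or.inl ⟨hke, j, hj1,
          fun m hm => by simp [Finsupp.single_apply, Ne.symm hm],
          by simp⟩)
      · have hps : psize (l + Finsupp.single j 1) = psize l + 1 :=
          psize_add_single l j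
        have hphim : phi n (l + Finsupp.single j 1) k
            = vec (l + Finsupp.single j 1) n := by simp [phi, hke]
        rw [hphim, hphil]
        funext i
        rcases eq_or_ne i 0 with rfl | hi0
        · rw [swap0_zero, vec_zero, vec_pos l n hj0]
          omega
        · rcases eq_or_ne i j with rfl | hij
          · rw [swap0_self _ _ hi0, vec_pos _ n hi0, vec_zero]
            simp only [Finsupp.add_apply, Finsupp.single_apply, if_pos rfl]
            push_cast
            omega
          · rw [swap0_other _ _ _ hi0 hij, vec_pos _ n hi0, vec_pos _ n hi0]
            simp [Finsupp.single_apply, Ne.symm hij]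
      · exact fun _ => ⟨rfl, rfl⟩
      · intro h; omega
    · -- l = eta + box at i : contradiction
      exfalso
      have hl : l = eta + Finsupp.single i 1 := eq_add_single eta l i hin hie
      have hps : psize l = psize eta + 1 := by rw [hl, psize_add_single]
      have hlj : eta j ≤ l j := by
        rcases eq_or_ne i j with rfl | h
        · omega
        · rw [hin j (Ne.symm h)]
      omega
    · omega
  · -- k odd
    have hk1 : (k - 1) % 2 = 0 := by omega
    have hphil : phi n l k = vec l (n - 1) := by simp [phi, hko]
    have hphie : phi n eta (k - 1) = vec eta n := by simp [phi, hk1]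
    rw [hphie, vec_zero, vec_pos eta n hj0] at hwall'
    rw [hphil, vec_zero, vec_pos l (n-1) hj0] at hxlt
    rcases hedge with rfl | ⟨hke', _⟩ | ⟨_, i, hi1, hin, hie⟩
    · exfalso; omega
    · omega
    · -- eta = l + box at i; show i = j
      have he : eta = l + Finsupp.single i 1 :=
        eq_add_single l eta i (fun m hm => (hin m hm).symm) hie
      have hps : psize eta = psize l + 1 := by rw [he, psize_add_single]
      have hij : i = j := by
        by_contra h
        have : l j = eta j := hin j (Ne.symm h)
        omega
      subst hij
      refine ⟨eta, ⟨hev.1, le_trans hev.2 (Nat.div_le_div_right (Nat.sub_le k 1))⟩,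
        Or.inl rfl, ?_, fun h => by omega, fun _ => ⟨he, rfl⟩⟩
      have hphim : phi n eta k = vec eta (n - 1) := by simp [phi, hko]
      rw [hphim, hphil]
      funext m
      rcases eq_or_ne m 0 with rfl | hm0
      · rw [swap0_zero, vec_zero, vec_pos l (n-1) hj0]
        omega
      · rcases eq_or_ne m i with rfl | hmi
        · rw [swap0_self _ _ hm0, vec_pos _ _ hm0, vec_zero]
          omega
        · rw [swap0_other _ _ _ hm0 hmi, vec_pos _ _ hm0, vec_pos _ _ hm0,
            hin m hmi]
end

section
/- Let t be a path of length k in the branching graph with t(k) = (λ, k) and |λ| = ⌊k/2⌋. Then every step of t strictly alternates: for i even, t(i) = t(i−1) ∪ {a} (a box is added), and for i odd, t(i) = t(i−1) (the partition is unchanged). Equivalently, in the embedded graph, φ_n(t(i)) = φ_n(t(i−1)) + ε_j for some j ≥ 1 when i is even, and φ_n(t(i)) = φ_n(t(i−1)) − ε₀ when i is odd. -/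
lemma psize_succ_of (lam mu : ℕ →₀ ℕ) (j : ℕ)
    (hm : ∀ m, m ≠ j → lam m = mu m) (hj : lam j = mu j + 1) :
    psize lam = psize mu + 1 := by
  have h : lam = mu + Finsupp.single j 1 := by
    ext m
    by_cases hmj : m = j
    · subst hmj; simp [hj]
    · simp [hm m hmj, Finsupp.single_apply, Ne.symm hmj]
  rw [h]
  unfold psize
  rw [Finsupp.sum_add_index' (fun _ => rfl) (fun _ _ _ => rfl)]
  simp [Finsupp.sum_single_index]

lemma key_psize (k : ℕ) (t : ℕ → (ℕ →₀ ℕ))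
    (hv : ∀ i, i ≤ k → IsVertex (t i) i)
    (hedge : ∀ i, 1 ≤ i → i ≤ k → BrEdge (t (i - 1)) (t i) i)
    (hmax : psize (t k) = k / 2) :
    ∀ i, i ≤ k → psize (t i) = i / 2 := by
  suffices h : ∀ d i, i + d = k → psize (t i) = i / 2 by
    intro i hi; exact h (k - i) i (by omega)
  intro d
  induction d with
  | zero =>
    intro i hik
    obtain rfl : i = k := by omega
    exact hmax
  | succ d ih =>
    intro i hik
    have hs : psize (t (i + 1)) = (i + 1) / 2 := ih (i + 1) (by omega)
    have hvb : psize (t i) ≤ i / 2 := (hv i (by omega)).2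
    have he := hedge (i + 1) (by omega) (by omega)
    simp only [Nat.add_sub_cancel] at he
    rcases he with he | ⟨hpar, j, _, hm, hj⟩ | ⟨hpar, j, _, hm, hj⟩
    · rw [he] at hs; omega
    · have := psize_succ_of (t (i + 1)) (t i) j hm hj; omega
    · have := psize_succ_of (t i) (t (i + 1)) j
        (fun m hmm => (hm m hmm).symm) hj
      omega

theorem stmt16 (n : ℤ) (k : ℕ) (t : ℕ → (ℕ →₀ ℕ)) (ht0 : t 0 = 0)
    (hv : ∀ i, i ≤ k → IsVertex (t i) i)
    (hedge : ∀ i, 1 ≤ i → i ≤ k → BrEdge (t (i - 1)) (t i) i)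
    (hmax : psize (t k) = k / 2) :
    ∀ i, 1 ≤ i → i ≤ k →
      (i % 2 = 0 → ∃ j, 1 ≤ j ∧ (∀ m, m ≠ j → t i m = t (i - 1) m) ∧
        t i j = t (i - 1) j + 1 ∧
        phi n (t i) i = fun m => phi n (t (i - 1)) (i - 1) m + eps j m) ∧
      (i % 2 = 1 → t i = t (i - 1) ∧
        phi n (t i) i = fun m => phi n (t (i - 1)) (i - 1) m - eps 0 m) := by
  intro i h1 hik
  have hpi : psize (t i) = i / 2 := key_psize k t hv hedge hmax i hik
  have hpi1 : psize (t (i - 1)) = (i - 1) / 2 :=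
    key_psize k t hv hedge hmax (i - 1) (by omega)
  have he := hedge i h1 hik
  constructor
  · intro hpar
    have hodd : (i - 1) % 2 = 1 := by omega
    rcases he with he | ⟨_, j, hj1, hm, hj⟩ | ⟨hp, _⟩
    · exfalso
      rw [he] at hpi; omega
    · refine ⟨j, hj1, hm, hj, ?_⟩
      have hps : psize (t i) = psize (t (i - 1)) + 1 :=
        psize_succ_of (t i) (t (i - 1)) j hm hj
      funext m
      simp only [phi, hpar, hodd, if_pos rfl]
      norm_num
      simp only [vec, lamBr, rho, eps]
      by_cases hm0 : m = 0
      · subst hm0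
        have : (0 : ℕ) ≠ j := by omega
        simp [this, hps]
        push_cast
        ring
      · by_cases hmj : m = j
        · subst hmj
          simp [hm0, hj]
          push_cast
          ring
        · simp [hm0, hmj, hm m hmj]
    · omega
  · intro hpar
    have heven : (i - 1) % 2 = 0 := by omega
    rcases he with he | ⟨hp, _⟩ | ⟨_, j, hj1, hm, hj⟩
    · refine ⟨he, ?_⟩
      funext m
      simp only [phi, hpar, heven, if_pos rfl]
      norm_num
      simp only [vec, lamBr, rho, eps, he]
      by_cases hm0 : m = 0
      · subst hm0; simp; ring
      · simp [hm0]
    · omega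
    · exfalso
      have hps : psize (t (i - 1)) = psize (t i) + 1 :=
        psize_succ_of (t (i - 1)) (t i) j (fun m hmm => (hm m hmm).symm) hj
      omega
end

section
/- Let s, t be two paths of the same length k in the branching graph, and write x^{(i)} = φ_n(s(i)), y^{(i)} = φ_n(t(i)). Suppose s ≈_n t (they have the same n-residue vector, equivalently x^{(i)} and y^{(i)} change in coordinates with equal values at every step as in Lemma 'reflectionystuff'). If x^{(i)} = y^{(i)} for some i but x^{(i+1)} ≠ y^{(i+1)}, then x^{(i)} lies on the j-th wall for some j ≥ 1 and y^{(i+1)} = s_{0,j}(x^{(i+1)}). -/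
lemma tail_lt (x : ℕ → ℤ) (hx : StrictTail x) : ∀ a b, 1 ≤ a → a < b → x b < x a := by
  intro a b ha hab
  induction b with
  | zero => omega
  | succ b ih =>
    rcases Nat.lt_succ_iff_lt_or_eq.mp hab with h | h
    · exact (hx b (by omega)).trans (ih h)
    · subst h; exact hx a ha

theorem stmt18 (x y x' y' : ℕ → ℤ) (u v : ℕ) (δ : ℤ) (hδ : δ = 1 ∨ δ = -1)
    (hxt : StrictTail x)
    (hx' : x' = fun m => x m + δ * eps u m) (hy' : y' = fun m => y m + δ * eps v m)
    (hres : x' u = y' v)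
    (heq : x = y) (hne : x' ≠ y') :
    ∃ j, 1 ≤ j ∧ OnWall x j ∧ y' = swap0 j x' := by
  subst heq hx' hy'
  simp only [eps, if_pos rfl, mul_one] at hres
  have huv : x u = x v := by omega
  have hune : u ≠ v := by
    rintro rfl; exact hne rfl
  have h0 : u = 0 ∨ v = 0 := by
    by_contra h
    push_neg at h
    rcases Nat.lt_or_ge u v with hlt | hge
    · have := tail_lt x hxt u v (by omega) hlt; omega
    · have := tail_lt x hxt v u (by omega) (by omega); omega
  rcases h0 with rfl | rfl
  · refine ⟨v, by omega, ⟨by omega, huv⟩, funext fun i => ?_⟩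
    simp only [swap0, eps]
    by_cases h1 : i = 0
    · subst h1; simp [hune, Ne.symm hune, huv]
    · by_cases h2 : i = v
      · subst h2; simp [h1, huv]
      · simp [h1, h2, Ne.symm h1, Ne.symm h2]
  · refine ⟨u, by omega, ⟨by omega, huv.symm⟩, funext fun i => ?_⟩
    simp only [swap0, eps]
    by_cases h1 : i = 0
    · subst h1; simp [hune, Ne.symm hune, huv]
    · by_cases h2 : i = u
      · subst h2; simp [h1, Ne.symm h1, hune, huv]
      · simp [h1, h2, Ne.symm h1, Ne.symm h2]
end
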